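/- Let α σ : ℝ with α ≠ 0 and σ > 0, and let p₁ : ℝ → ℝ be everywhere positive and differentiable. Define the Gaussian kernel k z z₁ = (2 * π * σ^2)^(-(1:ℝ)/2) * Real.exp ( −(z − α * z₁)^2 / (2 * σ^2) ) and the noisy marginal q z = ∫ z₁, k z z₁ * p₁ z₁. Fix z : ℝ and assume: (i) q z > 0; (ii) q has derivative at z equal to ∫ z₁, ( −(z − α * z₁) / σ^2 ) * k z z₁ * p₁ z₁ (differentiation under the integral sign holds); (iii) ∫ z₁, deriv (fun w => k z w * p₁ w) z₁ = 0 (the boundary term vanishes); (iv) the functions z₁ ↦ ((z − α * z₁) / σ^2) * k z z₁ * p₁ z₁ and z₁ ↦ k z z₁ * deriv p₁ z₁ are integrable on ℝ. Then deriv (fun w => Real.log (q w)) z = (1/α) * ∫ z₁, ( deriv p₁ z₁ / p₁ z₁ ) * ( k z z₁ * p₁ z₁ / q z ). -/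

import Mathlib

open MeasureTheory

/-- Target Score Matching identity (continuous, 1-dimensional): for a Gaussian noising
kernel `k z z₁ = (2πσ²)^{-1/2} exp(-(z - α z₁)²/(2σ²))` and noisy marginal
`q z = ∫ z₁, k z z₁ * p₁ z₁`, under differentiation-under-the-integral, vanishing
boundary term and integrability assumptions, the score of the noisy marginal at `z`
equals `1/α` times the posterior expectation of the clean score `(deriv p₁) / p₁`. -/
theorem target_score_matching_identity
    (α σ : ℝ) (hα : α ≠ 0) (hσ : 0 < σ)
    (p₁ : ℝ → ℝ) (hp₁_pos : ∀ z, 0 < p₁ z) (hp₁_diff : Differentiable ℝ p₁)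
    (k : ℝ → ℝ → ℝ)
    (hk : ∀ z z₁, k z z₁ =
      (2 * Real.pi * σ ^ 2) ^ (-(1 : ℝ) / 2) *
        Real.exp (-(z - α * z₁) ^ 2 / (2 * σ ^ 2)))
    (q : ℝ → ℝ) (hq : ∀ z, q z = ∫ z₁, k z z₁ * p₁ z₁)
    (z : ℝ) (hqz : 0 < q z)
    (hq_deriv : HasDerivAt q (∫ z₁, (-(z - α * z₁) / σ ^ 2) * k z z₁ * p₁ z₁) z)
    (hboundary : (∫ z₁, deriv (fun w => k z w * p₁ w) z₁) = 0)
    (hint1 : Integrable (fun z₁ => ((z - α * z₁) / σ ^ 2) * k z z₁ * p₁ z₁))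
    (hint2 : Integrable (fun z₁ => k z z₁ * deriv p₁ z₁)) :
    deriv (fun w => Real.log (q w)) z =
      (1 / α) * ∫ z₁, (deriv p₁ z₁ / p₁ z₁) * (k z z₁ * p₁ z₁ / q z) := by
  have hσ2 : (σ:ℝ)^2 ≠ 0 := pow_ne_zero _ hσ.ne'
  -- derivative of k z · at any point w
  have hk_deriv : ∀ w, HasDerivAt (fun w => k z w) (α * (z - α * w) / σ ^ 2 * k z w) w := by
    intro w
    have h1 : HasDerivAt (fun w : ℝ => z - α * w) (-α) w := by
      simpa using ((hasDerivAt_id w).const_mul α).const_sub z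
    have h2 : HasDerivAt (fun w : ℝ => -(z - α * w) ^ 2 / (2 * σ ^ 2))
        (-(2 * (z - α * w) ^ 1 * -α) / (2 * σ ^ 2)) w := ((h1.pow 2).neg).div_const _
    have h3 := ((h2.exp).const_mul ((2 * Real.pi * σ ^ 2) ^ (-(1 : ℝ) / 2)))
    have : (fun w : ℝ => (2 * Real.pi * σ ^ 2) ^ (-(1 : ℝ) / 2) *
        Real.exp (-(z - α * w) ^ 2 / (2 * σ ^ 2))) = fun w => k z w := by
      funext w; rw [hk]
    rw [this] at h3
    refine h3.congr_deriv ?_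
    rw [hk]
    field_simp
  -- derivative of the product k z · * p₁ ·
  have hprod : ∀ w, deriv (fun w => k z w * p₁ w) w =
      α * (z - α * w) / σ ^ 2 * k z w * p₁ w + k z w * deriv p₁ w := by
    intro w
    exact ((hk_deriv w).mul (hp₁_diff w).hasDerivAt).deriv
  -- integrability of first piece
  have hint1' : Integrable (fun z₁ => α * (z - α * z₁) / σ ^ 2 * k z z₁ * p₁ z₁) := by
    have := hint1.const_mul α
    convert this using 2 with z₁
    ring
  -- boundary: split integral
  have hsplit : (∫ z₁, α * (z - α * z₁) / σ ^ 2 * k z z₁ * p₁ z₁)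
      + (∫ z₁, k z z₁ * deriv p₁ z₁) = 0 := by
    rw [← integral_add hint1' hint2]
    rw [← hboundary]
    congr 1
    funext w
    rw [hprod w]
  have key : (∫ z₁, (-(z - α * z₁) / σ ^ 2) * k z z₁ * p₁ z₁)
      = (1 / α) * ∫ z₁, k z z₁ * deriv p₁ z₁ := by
    have h1 : (∫ z₁, α * (z - α * z₁) / σ ^ 2 * k z z₁ * p₁ z₁)
        = α * ∫ z₁, ((z - α * z₁) / σ ^ 2) * k z z₁ * p₁ z₁ := by
      rw [← integral_const_mul]
      congr 1; funext z₁; ring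
    have h2 : (∫ z₁, (-(z - α * z₁) / σ ^ 2) * k z z₁ * p₁ z₁)
        = - ∫ z₁, ((z - α * z₁) / σ ^ 2) * k z z₁ * p₁ z₁ := by
      rw [← integral_neg]
      congr 1; funext z₁; ring
    rw [h2]
    rw [h1] at hsplit
    have hJ : (∫ z₁, k z z₁ * deriv p₁ z₁)
        = -(α * ∫ z₁, ((z - α * z₁) / σ ^ 2) * k z z₁ * p₁ z₁) := by linarith
    rw [hJ]
    field_simp
  -- lhs
  have hlog : HasDerivAt (fun w => Real.log (q w))
      ((∫ z₁, (-(z - α * z₁) / σ ^ 2) * k z z₁ * p₁ z₁) / q z) z :=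
    hq_deriv.log hqz.ne'
  rw [hlog.deriv, key]
  -- rhs integrand simplification
  have hrhs : (∫ z₁, (deriv p₁ z₁ / p₁ z₁) * (k z z₁ * p₁ z₁ / q z))
      = (∫ z₁, k z z₁ * deriv p₁ z₁) / q z := by
    rw [← integral_div]
    congr 1; funext z₁
    field_simp [(hp₁_pos z₁).ne']
  rw [hrhs]
  field_simp
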